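/- arXiv:0809.0502 — 2 statements merged into one kernel-verified Lean document; each statement's English description precedes it below -/
import Mathlib

section
/- The element a_3^2 + 2a_2a_4 is invariant: η_R(a_3^2 + 2a_2a_4) = a_3^2 + 2a_2a_4 in Ā[r]. -/
/-!
`Abar = 𝔽_5[a_2,a_3,a_4]` (the variable `0,1,2 : Fin 3` are `a_2, a_3, a_4`),
`q(t) = t^5 + a_2t^3 + a_3t^2 + a_4t`, and `etaR : Abar → Abar[r]` is the
𝔽_5-algebra map sending `a_i` to the coefficient of `x^{5-i}` in `q(x+r) - q(r)`,
computed in `Abar[r][x]`.  This is the reduction modulo `(5, a_1, a_5)` of the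
Gorbounov–Hopkins–Mahowald Hopf algebroid at the prime `5`.
-/

/-- The ring `Ā = 𝔽_5[a_2,a_3,a_4]`. -/
abbrev Abar : Type := MvPolynomial (Fin 3) (ZMod 5)

/-- The generator `a_2`. -/
noncomputable def a2 : Abar := MvPolynomial.X 0
/-- The generator `a_3`. -/
noncomputable def a3 : Abar := MvPolynomial.X 1
/-- The generator `a_4`. -/
noncomputable def a4 : Abar := MvPolynomial.X 2

/-- The polynomial `q(t) = t^5 + a_2t^3 + a_3t^2 + a_4t` as an element of `Ā[t]`. -/
noncomputable def q : Polynomial Abar :=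
  Polynomial.X ^ 5 + Polynomial.C a2 * Polynomial.X ^ 3 + Polynomial.C a3 * Polynomial.X ^ 2 +
    Polynomial.C a4 * Polynomial.X

/-- `q(x+r) - q(r)`, an element of `Ā[r][x]` (the inner variable is `r`, the outer is `x`). -/
noncomputable def qShift : Polynomial (Polynomial Abar) :=
  Polynomial.eval₂ (Polynomial.C.comp Polynomial.C)
      (Polynomial.X + Polynomial.C Polynomial.X) q -
    Polynomial.eval₂ (Polynomial.C.comp Polynomial.C) (Polynomial.C Polynomial.X) q

/-- The right unit `η_R : Ā → Ā[r]`, sending `a_i` (for `i = 2,3,4`) to the coefficient of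
`x^{5-i}` in `q(x+r) - q(r)`. -/
noncomputable def etaR : Abar →ₐ[ZMod 5] Polynomial Abar :=
  MvPolynomial.aeval (fun k : Fin 3 => qShift.coeff (3 - k.1))

lemma h5 : (5 : Polynomial Abar) = 0 := by
  exact_mod_cast CharP.cast_eq_zero (Polynomial Abar) 5

lemma h10 : ((Nat.choose 5 3 : ℕ) : Polynomial Abar) = 0 := by
  show ((10:ℕ) : Polynomial Abar) = 0
  push_cast
  linear_combination 2 * h5

lemma h10' : ((Nat.choose 5 2 : ℕ) : Polynomial Abar) = 0 := by
  exact h10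

lemma h5' : ((Nat.choose 5 1 : ℕ) : Polynomial Abar) = 0 := by
  show ((5:ℕ) : Polynomial Abar) = 0
  push_cast
  linear_combination h5

lemma hcoeff (k : ℕ) : qShift.coeff k =
    (Polynomial.eval₂ (Polynomial.C.comp Polynomial.C)
      (Polynomial.X + Polynomial.C Polynomial.X) q).coeff k -
    (Polynomial.eval₂ (Polynomial.C.comp Polynomial.C) (Polynomial.C Polynomial.X) q).coeff k := by
  simp [qShift]

lemma eval₂_mul_A (x : Polynomial (Polynomial Abar)) (p r : Polynomial Abar) :
    Polynomial.eval₂ (Polynomial.C.comp Polynomial.C) x (p * r) =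
      Polynomial.eval₂ (Polynomial.C.comp Polynomial.C) x p *
        Polynomial.eval₂ (Polynomial.C.comp Polynomial.C) x r :=
  Polynomial.eval₂_mul (R := Abar) (S := Polynomial (Polynomial Abar)) _ _
lemma eval₂_pow_A (x : Polynomial (Polynomial Abar)) (p : Polynomial Abar) (n : ℕ) :
    Polynomial.eval₂ (Polynomial.C.comp Polynomial.C) x (p ^ n) =
      Polynomial.eval₂ (Polynomial.C.comp Polynomial.C) x p ^ n :=
  Polynomial.eval₂_pow (R := Abar) (S := Polynomial (Polynomial Abar)) (p := p) (f := Polynomial.C.comp Polynomial.C) (x := x) n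
lemma h3 : qShift.coeff 3 = Polynomial.C a2 := by
  simp only [qShift, q, Polynomial.eval₂_add, Polynomial.eval₂_mul, Polynomial.eval₂_pow, eval₂_mul_A, eval₂_pow_A,
    Polynomial.eval₂_X, Polynomial.eval₂_C, RingHom.coe_comp, Function.comp_apply,
    Polynomial.coeff_sub, Polynomial.coeff_add, Polynomial.coeff_X_add_C_pow,
    Polynomial.coeff_C_mul, ← Polynomial.C_pow, Polynomial.coeff_C, Polynomial.coeff_X]

  norm_num [h10]

lemma h2 : qShift.coeff 2 = 3 * Polynomial.C a2 * Polynomial.X + Polynomial.C a3 := by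
  simp only [qShift, q, Polynomial.eval₂_add, Polynomial.eval₂_mul, Polynomial.eval₂_pow, eval₂_mul_A, eval₂_pow_A,
    Polynomial.eval₂_X, Polynomial.eval₂_C, RingHom.coe_comp, Function.comp_apply,
    Polynomial.coeff_sub, Polynomial.coeff_add, Polynomial.coeff_X_add_C_pow,
    Polynomial.coeff_C_mul, ← Polynomial.C_pow, Polynomial.coeff_C, Polynomial.coeff_X, reduceIte]
  rw [show Nat.choose 5 2 = 10 from rfl, show Nat.choose 3 2 = 3 from rfl,
    show Nat.choose 2 2 = 1 from rfl]
  push_cast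
  linear_combination (Polynomial.X ^ 3 * 2) * h5

lemma h1 : qShift.coeff 1 = 3 * Polynomial.C a2 * Polynomial.X ^ 2
    + 2 * Polynomial.C a3 * Polynomial.X + Polynomial.C a4 := by
  simp only [qShift, q, Polynomial.eval₂_add, Polynomial.eval₂_mul, Polynomial.eval₂_pow, eval₂_mul_A, eval₂_pow_A,
    Polynomial.eval₂_X, Polynomial.eval₂_C, RingHom.coe_comp, Function.comp_apply,
    Polynomial.coeff_sub, Polynomial.coeff_add, Polynomial.coeff_X_add_C_pow,
    Polynomial.coeff_C_mul, ← Polynomial.C_pow, Polynomial.coeff_C, Polynomial.coeff_X, reduceIte]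
  rw [show Nat.choose 5 1 = 5 from rfl, show Nat.choose 3 1 = 3 from rfl,
    show Nat.choose 2 1 = 2 from rfl]
  push_cast
  linear_combination (Polynomial.X ^ 4) * h5

/-- The element `a_3² + 2a_2a_4` is invariant: `η_R(a_3² + 2a_2a_4) = a_3² + 2a_2a_4`. -/
theorem a32_invariant :
    etaR (a3 ^ 2 + 2 * a2 * a4) = Polynomial.C (a3 ^ 2 + 2 * a2 * a4) := by
  have e2 : etaR a2 = qShift.coeff 3 := by simp [etaR, a2]
  have e3 : etaR a3 = qShift.coeff 2 := by simp [etaR, a3]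
  have e4 : etaR a4 = qShift.coeff 1 := by simp [etaR, a4]
  simp only [map_add, map_mul, map_pow, map_ofNat, e2, e3, e4, h1, h2, h3]
  linear_combination (3 * Polynomial.C a2 ^ 2 * Polynomial.X ^ 2
    + 2 * Polynomial.C a2 * Polynomial.C a3 * Polynomial.X) * h5
end

section
/- For f = a_4^2r + 2a_3a_4r^2 + 3a_3^2r^3 + 2a_2a_4r^3 + 3a_2a_3r^4 ∈ Ā[r], the identity d(f) = −a_2^2·b holds in Ā[r_1,r_2], where b = r_1^4r_2 + 2r_1^3r_2^2 + 2r_1^2r_2^3 + r_1r_2^4. -/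
/-- The cobar differential: for `f = ∑_k c_k r^k`, `d(f) = ∑_k η_R(c_k)[r:=r_1]·r_2^k
− f[r:=r_1+r_2] + f[r:=r_1]`, an element of `Ā[r_1][r_2]` (the inner variable is `r_1`,
the outer is `r_2`). -/
noncomputable def cobarD (f : Polynomial Abar) : Polynomial (Polynomial Abar) :=
  (∑ k ∈ Finset.range (f.natDegree + 1),
      Polynomial.C (etaR (f.coeff k)) * Polynomial.X ^ k) -
    Polynomial.eval₂ (Polynomial.C.comp Polynomial.C)
      (Polynomial.C Polynomial.X + Polynomial.X) f +
    Polynomial.C f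

/-- The class `b = r_1^4r_2 + 2r_1^3r_2^2 + 2r_1^2r_2^3 + r_1r_2^4`, the mod-5 reduction of
`((r_1+r_2)^5 − r_1^5 − r_2^5)/5`. -/
noncomputable def bclass : Polynomial (Polynomial Abar) :=
  Polynomial.C (Polynomial.X ^ 4) * Polynomial.X +
    2 * Polynomial.C (Polynomial.X ^ 3) * Polynomial.X ^ 2 +
    2 * Polynomial.C (Polynomial.X ^ 2) * Polynomial.X ^ 3 +
    Polynomial.C Polynomial.X * Polynomial.X ^ 4


open Polynomial in
lemma qShift_eq : qShift =
    C (C a4 + 2 * C a3 * X + 3 * C a2 * X ^ 2 + 5 * X ^ 4) * X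
    + C (C a3 + 3 * C a2 * X + 10 * X ^ 3) * X ^ 2
    + C (C a2 + 10 * X ^ 2) * X ^ 3
    + C ((5 : Polynomial Abar) * X) * X ^ 4 + X ^ 5 := by
  unfold qShift q
  have hm : ∀ (p r : Polynomial Abar) (y : Polynomial (Polynomial Abar)),
      eval₂ (C.comp C) y (p * r) = eval₂ (C.comp C) y p * eval₂ (C.comp C) y r :=
    fun p r y => eval₂_mul_noncomm _ _ (fun _ => Commute.all (S := Polynomial (Polynomial Abar)) _ _)
  have hp : ∀ (p : Polynomial Abar) (n : ℕ) (y : Polynomial (Polynomial Abar)),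
      eval₂ (C.comp C) y (p ^ n) = eval₂ (C.comp C) y p ^ n :=
    fun p n y => eval₂_pow (S := Polynomial (Polynomial Abar)) _ _ _
  simp only [eval₂_add, hm, hp, eval₂_X, eval₂_C, RingHom.coe_comp,
    Function.comp_apply, map_add, map_mul, map_pow, map_ofNat]
  ring

open Polynomial in
lemma etaR_a2 : etaR a2 = C a2 + 10 * X ^ 2 := by
  have h : etaR a2 = qShift.coeff 3 := by
    unfold etaR a2; rw [MvPolynomial.aeval_X]; norm_num
  rw [h, qShift_eq]
  simp only [coeff_add, coeff_C_mul, coeff_X_pow, coeff_X, mul_ite, mul_one, mul_zero]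
  norm_num

open Polynomial in
lemma etaR_a3 : etaR a3 = C a3 + 3 * C a2 * X + 10 * X ^ 3 := by
  have h : etaR a3 = qShift.coeff 2 := by
    unfold etaR a3; rw [MvPolynomial.aeval_X]; norm_num
  rw [h, qShift_eq]
  simp only [coeff_add, coeff_C_mul, coeff_X_pow, coeff_X, mul_ite, mul_one, mul_zero]
  norm_num

open Polynomial in
lemma etaR_a4 : etaR a4 = C a4 + 2 * C a3 * X + 3 * C a2 * X ^ 2 + 5 * X ^ 4 := by
  have h : etaR a4 = qShift.coeff 1 := by
    unfold etaR a4; rw [MvPolynomial.aeval_X]; norm_num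
  rw [h, qShift_eq]
  simp only [coeff_add, coeff_C_mul, coeff_X_pow, coeff_X, mul_ite, mul_one, mul_zero]
  norm_num

lemma h3' : (3 : Abar) ≠ 0 := by
  have h : MvPolynomial.C (3 : ZMod 5) ≠ MvPolynomial.C (0 : ZMod 5) :=
    (MvPolynomial.C_injective (Fin 3) (ZMod 5)).ne (show (3 : ZMod 5) ≠ 0 by decide)
  rwa [map_ofNat, map_zero] at h

lemma hlc' : (3 : Abar) * (a2 * a3) ≠ 0 := by
  haveI : Fact (Nat.Prime 5) := ⟨by norm_num⟩
  exact mul_ne_zero h3' (mul_ne_zero (MvPolynomial.X_ne_zero _) (MvPolynomial.X_ne_zero _))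

open Polynomial in
set_option maxHeartbeats 2000000 in
set_option maxSynthPendingDepth 3 in

/-- For `f = a_4²r + 2a_3a_4r² + 3a_3²r³ + 2a_2a_4r³ + 3a_2a_3r⁴`, one has `d(f) = −a_2²·b`. -/
theorem d2_x2 :
    cobarD
        (Polynomial.C (a4 ^ 2) * Polynomial.X + 2 * Polynomial.C (a3 * a4) * Polynomial.X ^ 2 +
          3 * Polynomial.C (a3 ^ 2) * Polynomial.X ^ 3 +
          2 * Polynomial.C (a2 * a4) * Polynomial.X ^ 3 +
          3 * Polynomial.C (a2 * a3) * Polynomial.X ^ 4) =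
      -Polynomial.C (Polynomial.C (a2 ^ 2)) * bclass := by
  have hf : C (a4 ^ 2) * X + 2 * C (a3 * a4) * X ^ 2 + 3 * C (a3 ^ 2) * X ^ 3 +
      2 * C (a2 * a4) * X ^ 3 + 3 * C (a2 * a3) * X ^ 4 =
      C (a4 ^ 2) * X + C (2 * (a3 * a4)) * X ^ 2 +
        C (3 * a3 ^ 2 + 2 * (a2 * a4)) * X ^ 3 + C (3 * (a2 * a3)) * X ^ 4 := by
    simp only [map_add, map_mul, map_ofNat, map_pow]; ring
  rw [hf]
  have hlc := hlc'
  have hdeg : (C (a4 ^ 2) * X + C (2 * (a3 * a4)) * X ^ 2 +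
      C (3 * a3 ^ 2 + 2 * (a2 * a4)) * X ^ 3 + C (3 * (a2 * a3)) * X ^ 4).natDegree = 4 := by
    compute_degree <;> first | exact hlc | norm_num
  unfold cobarD
  rw [hdeg]
  have hm : ∀ (p r : Polynomial Abar) (y : Polynomial (Polynomial Abar)),
      eval₂ (C.comp C) y (p * r) = eval₂ (C.comp C) y p * eval₂ (C.comp C) y r :=
    fun p r y => eval₂_mul_noncomm _ _ (fun _ => Commute.all (S := Polynomial (Polynomial Abar)) _ _)
  have hp : ∀ (p : Polynomial Abar) (n : ℕ) (y : Polynomial (Polynomial Abar)),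
      eval₂ (C.comp C) y (p ^ n) = eval₂ (C.comp C) y p ^ n :=
    fun p n y => eval₂_pow (S := Polynomial (Polynomial Abar)) _ _ _
  simp only [Finset.sum_range_succ, Finset.sum_range_zero, coeff_add, coeff_C_mul, coeff_X_pow,
    coeff_X, eval₂_add, hm, hp, eval₂_X, eval₂_C, RingHom.coe_comp,
    Function.comp_apply]
  norm_num
  simp only [map_add, map_mul, map_pow, map_ofNat, etaR_a2, etaR_a3, etaR_a4]
  have h5 : (5 : Polynomial (Polynomial Abar)) = 0 := by
    have := CharP.cast_eq_zero (Polynomial (Polynomial Abar)) 5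
    simpa using this
  unfold bclass
  simp only [map_add, map_mul, map_pow, map_ofNat]
  linear_combination (60*(C X:Polynomial (Polynomial Abar))^5*X^4 + 80*C X^6*X^3 + 20*C X^7*X^2
    + 5*C X^8*X + 4*C (C a4)*C X^2*X^3 + 4*C (C a4)*C X^3*X^2 + 2*C (C a4)*C X^4*X
    + 6*C (C a3)*C X^2*X^4 + 20*C (C a3)*C X^3*X^3 + 10*C (C a3)*C X^4*X^2 + 4*C (C a3)*C X^5*X
    - C (C a3)^2*C X*X^2 - C (C a3)^2*C X^2*X + 24*C (C a2)*C X^3*X^4 + 50*C (C a2)*C X^4*X^3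
    + 18*C (C a2)*C X^5*X^2 + 6*C (C a2)*C X^6*X + 2*C (C a2)*C (C a3)*C X*X^3
    + 2*C (C a2)^2*C X*X^4 + 7*C (C a2)^2*C X^2*X^3 + 4*C (C a2)^2*C X^3*X^2
    + 2*C (C a2)^2*C X^4*X) * h5
end
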